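/- For all 0 ≤ α < α′ ≤ 1: F(α′) → F(α) but not F(α) → F(α′). Consequently the family { F(α) : α ∈ [0,1] } is a strictly ordered chain with infinitely many pairwise inequivalent elements; hence the convertibility pre-order on non-disturbing n-cycle behaviors has infinite height and is locally infinite (the interval between F(1) = B_PR and F(0) = B_NPR contains infinitely many pairwise inequivalent behaviors). -/

import Mathlib

open Finset

/-- The outcome value `±1` encoded by a `Bool`. -/
def sval (b : Bool) : ℝ := if b then 1 else -1

/-- An `n`-cycle behavior: for each context `{X_i, X_{i+1}}` (`i ∈ ZMod n`) a
probability distribution `p i` on pairs of `±1` outcomes (encoded as `Bool`s). -/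
def IsNCycleBehavior (n : ℕ) (p : ZMod n → Bool → Bool → ℝ) : Prop :=
  (∀ i a b, 0 ≤ p i a b) ∧ ∀ i : ZMod n, ∑ a : Bool, ∑ b : Bool, p i a b = 1

/-- Non-disturbance: for all `i` and `b`, `Σ_a p_i(a,b) = Σ_c p_{i+1}(b,c)`. -/
def NCycleNonDisturbing (n : ℕ) (p : ZMod n → Bool → Bool → ℝ) : Prop :=
  ∀ (i : ZMod n) (b : Bool), ∑ a : Bool, p i a b = ∑ c : Bool, p (i + 1) b c

/-- Noncontextuality: existence of a global probability distribution `q` on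
`ZMod n → Bool` whose marginals reproduce all the `p i`. -/
def NCycleNoncontextual (n : ℕ) [NeZero n] (p : ZMod n → Bool → Bool → ℝ) : Prop :=
  ∃ q : (ZMod n → Bool) → ℝ, (∀ x, 0 ≤ q x) ∧ (∑ x : ZMod n → Bool, q x = 1) ∧
    ∀ (i : ZMod n) (a b : Bool),
      p i a b = ∑ x : ZMod n → Bool, (if x i = a ∧ x (i + 1) = b then q x else 0)

/-- A sign vector: `γ : ZMod n → {-1, 1}` with an odd number of entries equal to `-1`. -/
def IsSignVector (n : ℕ) (γ : ZMod n → ℝ) : Prop :=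
  (∀ i, γ i = 1 ∨ γ i = -1) ∧ ∃ S : Finset (ZMod n), Odd S.card ∧ ∀ i, γ i = -1 ↔ i ∈ S

/-- The noncontextuality functional `Ω_γ(p) = Σ_i γ(i) ⟨X_i X_{i+1}⟩_p`, where
`⟨X_i X_{i+1}⟩_p = Σ_{a,b} a·b·p_i(a,b)`. -/
noncomputable def OmegaNC (n : ℕ) [NeZero n] (γ : ZMod n → ℝ)
    (p : ZMod n → Bool → Bool → ℝ) : ℝ :=
  ∑ i : ZMod n, γ i * ∑ a : Bool, ∑ b : Bool, sval a * sval b * p i a b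

/-- A type-preserving noncontextual wiring on the `n`-cycle scenario: a finite set `Λ`
(of natural numbers) with a probability distribution `ρ`; a finite set `R` with
pre-processing distributions `q j (·|λ)` on `R`; a context-selection map `g`; and
post-processing distributions `m j (·|r, s, λ)` on `{-1,1}` (encoded as `Bool`). -/
structure NCWiring (n : ℕ) where
  Λ : Finset ℕ
  ρ : ℕ → ℝ
  ρ_nonneg : ∀ l ∈ Λ, 0 ≤ ρ l
  ρ_sum : ∑ l ∈ Λ, ρ l = 1
  R : Finset ℕ
  q : ZMod n → ℕ → ℕ → ℝ
  q_nonneg : ∀ j l r, 0 ≤ q j l r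
  q_sum : ∀ j : ZMod n, ∀ l ∈ Λ, ∑ r ∈ R, q j l r = 1
  g : ZMod n → ℕ → ℕ → ZMod n
  m : ZMod n → ℕ → Bool → ℕ → Bool → ℝ
  m_nonneg : ∀ j r s l t, 0 ≤ m j r s l t
  m_sum : ∀ j r s l, ∑ t : Bool, m j r s l t = 1

/-- The action of a noncontextual wiring on a behavior:
`(W(B))_i(t,t') = Σ_λ ρ(λ) Σ_{r,r'} q_i(r|λ) q_{i+1}(r'|λ)
  Σ_{s,s'} p_{g(i,r,r')}(s,s') m_i(t|r,s,λ) m_{i+1}(t'|r',s',λ)`. -/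
def NCWiring.apply {n : ℕ} (W : NCWiring n) (p : ZMod n → Bool → Bool → ℝ) :
    ZMod n → Bool → Bool → ℝ :=
  fun i t t' => ∑ l ∈ W.Λ, W.ρ l * ∑ r ∈ W.R, ∑ r' ∈ W.R,
    W.q i l r * W.q (i + 1) l r' * ∑ s : Bool, ∑ s' : Bool,
      p (W.g i r r') s s' * W.m i r s l t * W.m (i + 1) r' s' l t'

/-- A wiring is deterministic when every pre-processing distribution `q j (·|λ)` and
every post-processing distribution `m j (·|r,s,λ)` is a point mass. -/
def NCWiring.IsDeterministic {n : ℕ} (W : NCWiring n) : Prop :=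
  (∀ j : ZMod n, ∀ l ∈ W.Λ, ∃ r₀ ∈ W.R, ∀ r ∈ W.R, W.q j l r = if r = r₀ then 1 else 0) ∧
  (∀ (j : ZMod n) (r : ℕ) (s : Bool) (l : ℕ),
    ∃ t₀ : Bool, ∀ t : Bool, W.m j r s l t = if t = t₀ then 1 else 0)

/-- `B → B'`: some type-preserving noncontextual wiring maps `B` to `B'`. -/
def NCConvertsTo (n : ℕ) (B B' : ZMod n → Bool → Bool → ℝ) : Prop :=
  ∃ W : NCWiring n, W.apply B = B'

/-- The PR-like behavior for a sign vector `γ`: `(B_PR)_i(a,b) = (1 + γ(i)·a·b)/4`. -/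
noncomputable def BPR (n : ℕ) (γ : ZMod n → ℝ) : ZMod n → Bool → Bool → ℝ :=
  fun i a b => (1 + γ i * sval a * sval b) / 4

/-- The noisy-PR behavior `B_NPR = ((n-2)/n)·B_PR + (2/n)·B_∅`, where
`B_∅` is the maximally mixed behavior with all probabilities `1/4`. -/
noncomputable def BNPR (n : ℕ) (γ : ZMod n → ℝ) : ZMod n → Bool → Bool → ℝ :=
  fun i a b => (((n : ℝ) - 2) / (n : ℝ)) * BPR n γ i a b + (2 / (n : ℝ)) * (1 / 4)

/-- The interpolating family `F(α) = α·B_PR + (1-α)·B_NPR`. -/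
noncomputable def Fmix (n : ℕ) (γ : ZMod n → ℝ) (α : ℝ) : ZMod n → Bool → Bool → ℝ :=
  fun i a b => α * BPR n γ i a b + (1 - α) * BNPR n γ i a b


/-! ### Auxiliary development -/

/-- The `B_PR`-weight of `F(α)`. -/
noncomputable def cc (n : ℕ) (α : ℝ) : ℝ := α + (1 - α) * (((n : ℝ) - 2) / (n : ℝ))

section Aux

variable {n : ℕ}

lemma npos (hn : 3 ≤ n) : (0:ℝ) < (n:ℝ) := by
  have : (3:ℝ) ≤ (n:ℝ) := by exact_mod_cast hn
  linarith

lemma ratio_nonneg (hn : 3 ≤ n) : 0 ≤ ((n:ℝ) - 2) / (n:ℝ) := by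
  have h3 : (3:ℝ) ≤ (n:ℝ) := by exact_mod_cast hn
  have := npos hn
  apply div_nonneg <;> linarith

lemma ratio_lt_one (hn : 3 ≤ n) : ((n:ℝ) - 2) / (n:ℝ) < 1 := by
  have := npos hn
  rw [div_lt_one this]; linarith

lemma cc_lb (hn : 3 ≤ n) {α : ℝ} (h0 : 0 ≤ α) : ((n:ℝ) - 2) / (n:ℝ) ≤ cc n α := by
  have h1 := ratio_lt_one hn
  unfold cc; nlinarith

lemma cc_ub (hn : 3 ≤ n) {α : ℝ} (h1 : α ≤ 1) : cc n α ≤ 1 := by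
  have h2 := ratio_lt_one hn
  have h3 := ratio_nonneg hn
  unfold cc; nlinarith

lemma cc_pos (hn : 3 ≤ n) {α : ℝ} (h0 : 0 ≤ α) : 0 < cc n α := by
  have h3 : (3:ℝ) ≤ (n:ℝ) := by exact_mod_cast hn
  have hN := npos hn
  have h4 : (0:ℝ) < ((n:ℝ) - 2) / (n:ℝ) := by
    apply div_pos <;> linarith
  linarith [cc_lb hn h0]

lemma cc_mono (hn : 3 ≤ n) {α β : ℝ} (h : β ≤ α) : cc n β ≤ cc n α := by
  have h2 := ratio_lt_one hn
  unfold cc; nlinarith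

lemma cc_strict (hn : 3 ≤ n) {α β : ℝ} (h : β < α) : cc n β < cc n α := by
  have h2 := ratio_lt_one hn
  unfold cc; nlinarith

lemma Fmix_eq (hn : 3 ≤ n) (γ : ZMod n → ℝ) (α : ℝ) (i : ZMod n) (a b : Bool) :
    Fmix n γ α i a b = (1 + cc n α * γ i * (sval a * sval b)) / 4 := by
  have hN : (n:ℝ) ≠ 0 := ne_of_gt (npos hn)
  simp only [Fmix, BPR, BNPR, cc]
  field_simp
  ring

lemma card_zmod [NeZero n] : (Finset.univ : Finset (ZMod n)).card = n := by
  simpa using ZMod.card n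

lemma gamma_sq {γ : ZMod n → ℝ} (hγ : IsSignVector n γ) (i : ZMod n) : γ i * γ i = 1 := by
  rcases hγ.1 i with h | h <;> rw [h] <;> norm_num

lemma gamma_abs {γ : ZMod n → ℝ} (hγ : IsSignVector n γ) (i : ZMod n) : |γ i| = 1 := by
  rcases hγ.1 i with h | h <;> rw [h] <;> norm_num

lemma omega_F [NeZero n] (hn : 3 ≤ n) (γ : ZMod n → ℝ) (hγ : IsSignVector n γ) (α : ℝ) :
    OmegaNC n γ (Fmix n γ α) = (n : ℝ) * cc n α := by
  unfold OmegaNC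
  have h : ∀ i : ZMod n,
      γ i * ∑ a : Bool, ∑ b : Bool, sval a * sval b * Fmix n γ α i a b = cc n α := by
    intro i
    simp only [Fmix_eq hn γ α, Fintype.sum_bool, sval]
    norm_num
    linear_combination cc n α * gamma_sq hγ i
  rw [Finset.sum_congr rfl (fun i _ => h i), Finset.sum_const, card_zmod]
  simp [mul_comm]

lemma prod_gamma [NeZero n] {γ : ZMod n → ℝ} (hγ : IsSignVector n γ) :
    ∏ i : ZMod n, γ i = -1 := by
  obtain ⟨hpm, S, hodd, hS⟩ := hγ
  have h : ∀ i : ZMod n, γ i = if i ∈ S then -1 else 1 := by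
    intro i
    by_cases h : i ∈ S
    · simp [h, (hS i).2 h]
    · rcases hpm i with h1 | h1
      · simp [h, h1]
      · exact absurd ((hS i).1 h1) h
  rw [Finset.prod_congr rfl (fun i _ => h i)]
  rw [← Finset.prod_sdiff (Finset.subset_univ S)]
  have h1 : ∏ i ∈ (Finset.univ : Finset (ZMod n)) \ S, (if i ∈ S then (-1:ℝ) else 1) = 1 := by
    apply Finset.prod_eq_one
    intro i hi
    simp [(Finset.mem_sdiff.mp hi).2]
  have h2 : ∏ i ∈ S, (if i ∈ S then (-1:ℝ) else 1) = (-1) ^ S.card := by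
    rw [Finset.prod_congr rfl (fun i hi => if_pos hi), Finset.prod_const]
  rw [h1, h2, one_mul, hodd.neg_one_pow]

lemma prod_shift [NeZero n] (a : ZMod n → ℝ) :
    ∏ i : ZMod n, a (i + 1) = ∏ i : ZMod n, a i :=
  Fintype.prod_equiv (Equiv.addRight (1 : ZMod n)) _ _ (fun i => rfl)

lemma exists_neg_edge [NeZero n] {γ : ZMod n → ℝ} (hγ : IsSignVector n γ)
    (a : ZMod n → ℝ) :
    ∃ i₀ : ZMod n, γ i₀ * (a i₀ * a (i₀ + 1)) = -(|a i₀| * |a (i₀ + 1)|) := by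
  by_contra h
  push_neg at h
  have hpos : ∀ i : ZMod n, 0 < γ i * (a i * a (i + 1)) := by
    intro i
    have habs : |γ i * (a i * a (i + 1))| = |a i| * |a (i + 1)| := by
      rw [abs_mul, gamma_abs hγ i, one_mul, abs_mul]
    rcases abs_cases (γ i * (a i * a (i + 1))) with ⟨h1, h2⟩ | ⟨h1, h2⟩
    · rcases lt_or_eq_of_le h2 with h3 | h3
      · exact h3
      · exfalso; apply h i; rw [← habs, ← h3]; simp [← h3]
    · exfalso; apply h i; rw [← habs]; rw [h1] at habs ⊢; linarith
  have hP : 0 < ∏ i : ZMod n, (γ i * (a i * a (i + 1))) :=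
    Finset.prod_pos (fun i _ => hpos i)
  rw [Finset.prod_mul_distrib, Finset.prod_mul_distrib, prod_gamma hγ, prod_shift a] at hP
  nlinarith [sq_nonneg (∏ i : ZMod n, a i)]

end Aux


section Key

variable {n : ℕ}

/-- The quadratic functional appearing in the wiring bound. -/
noncomputable def Phi (n : ℕ) [NeZero n] (c : ℝ) (i₀ : ZMod n) (x : ZMod n → ℝ) : ℝ :=
  ∑ i : ZMod n,
    ((if i = i₀ then (-1:ℝ) else 1) * (x i * x (i + 1)) + c * ((1 - x i) * (1 - x (i + 1))))

lemma one_ne_zero_zmod (hn : 3 ≤ n) : (1 : ZMod n) ≠ 0 := by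
  intro h
  have : ((1 : ℕ) : ZMod n) = 0 := by exact_mod_cast h
  rw [ZMod.natCast_eq_zero_iff] at this
  have := Nat.le_of_dvd one_pos this
  omega

lemma self_ne_succ (hn : 3 ≤ n) (i : ZMod n) : i ≠ i + 1 := by
  intro h
  have : (1 : ZMod n) = 0 := by
    have := h.symm
    linear_combination this
  exact one_ne_zero_zmod hn this

lemma sum_shift [NeZero n] (a : ZMod n → ℝ) :
    ∑ i : ZMod n, a (i + 1) = ∑ i : ZMod n, a i :=
  Fintype.sum_equiv (Equiv.addRight (1 : ZMod n)) _ _ (fun i => rfl)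

/-- Constancy around the cycle: if all edges except possibly `j` are "equal" edges,
then `x j = x (j+1)` too. -/
lemma cycle_const [NeZero n] (hn : 3 ≤ n) (x : ZMod n → ℝ) (j : ZMod n)
    (h : ∀ i : ZMod n, i ≠ j → x i = x (i + 1)) : x j = x (j + 1) := by
  have key : ∀ k : ℕ, k ≤ n - 1 → x (j + 1 + (k : ZMod n)) = x (j + 1) := by
    intro k
    induction k with
    | zero => intro _; simp
    | succ k ih =>
      intro hk
      have hk' : k ≤ n - 1 := by omega
      have hne : (j + 1 + (k : ZMod n)) ≠ j := by
        intro he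
        have h1 : ((k + 1 : ℕ) : ZMod n) = 0 := by
          push_cast
          linear_combination he
        rw [ZMod.natCast_eq_zero_iff] at h1
        have := Nat.le_of_dvd (Nat.succ_pos k) h1
        omega
      have := h _ hne
      have harr : j + 1 + ((k+1 : ℕ) : ZMod n) = (j + 1 + (k : ZMod n)) + 1 := by
        push_cast; ring
      rw [harr, ← this]
      exact ih hk'
  have hfin := key (n - 1) le_rfl
  have harr : j + 1 + ((n - 1 : ℕ) : ZMod n) = j := by
    have hcast : ((n : ℕ) : ZMod n) = 0 := ZMod.natCast_self n
    have : ((n - 1 : ℕ) : ZMod n) = ((n : ℕ) : ZMod n) - 1 := by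
      have hn1 : 1 ≤ n := by omega
      push_cast [Nat.cast_sub hn1]
      ring
    rw [this, hcast]; ring
  rw [harr] at hfin
  exact hfin

lemma phi_bool_le [NeZero n] (hn : 3 ≤ n) (c : ℝ)
    (hc1 : ((n:ℝ) - 2) / (n:ℝ) ≤ c) (hc2 : c ≤ 1) (i₀ : ZMod n)
    (x : ZMod n → ℝ) (hx : ∀ i, x i = 0 ∨ x i = 1) :
    Phi n c i₀ x ≤ (n:ℝ) * c := by
  have hN := npos hn
  have hc0 : 0 ≤ c := le_trans (ratio_nonneg hn) hc1
  have hn2 : (n:ℝ) - 2 ≤ c * n := by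
    rw [div_le_iff₀ hN] at hc1; linarith
  -- abbreviations
  set S : ℝ := ∑ i : ZMod n, x i with hS
  set B : ℝ := ∑ i : ZMod n, |x i - x (i + 1)| with hB
  -- rewrite Phi
  have hedge : ∀ i : ZMod n,
      x i * x (i + 1) + c * ((1 - x i) * (1 - x (i + 1)))
        = (1 - c) * ((x i + x (i + 1)) / 2) + c - (1 + c) * (|x i - x (i + 1)| / 2) := by
    intro i
    rcases hx i with h | h <;> rcases hx (i+1) with h' | h' <;>
      rw [h, h'] <;> norm_num <;> ring
  have hPhi : Phi n c i₀ x
      = (1 - c) * S + c * n - (1 + c) * (B / 2) - 2 * (x i₀ * x (i₀ + 1)) := by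
    unfold Phi
    have hsplit : ∀ i : ZMod n,
        (if i = i₀ then (-1:ℝ) else 1) * (x i * x (i + 1))
            + c * ((1 - x i) * (1 - x (i + 1)))
          = ((1 - c) * ((x i + x (i + 1)) / 2) + c - (1 + c) * (|x i - x (i + 1)| / 2))
            - (if i = i₀ then 2 * (x i * x (i + 1)) else 0) := by
      intro i
      rw [← hedge i]
      by_cases h : i = i₀ <;> simp [h] <;> ring
    rw [Finset.sum_congr rfl (fun i _ => hsplit i), Finset.sum_sub_distrib]
    simp only [Finset.sum_ite_eq' Finset.univ i₀, Finset.mem_univ, if_true]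
    have h1 : ∑ i : ZMod n,
        ((1 - c) * ((x i + x (i + 1)) / 2) + c - (1 + c) * (|x i - x (i + 1)| / 2))
        = (1 - c) * S + c * n - (1 + c) * (B / 2) := by
      rw [Finset.sum_sub_distrib, Finset.sum_add_distrib]
      rw [← Finset.mul_sum, ← Finset.mul_sum, Finset.sum_const, card_zmod]
      have h2 : ∑ i : ZMod n, ((x i + x (i + 1)) / 2) = S := by
        rw [← Finset.sum_div, Finset.sum_add_distrib, sum_shift]
        rw [← hS]; ring
      have h3 : ∑ i : ZMod n, (|x i - x (i + 1)| / 2) = B / 2 := by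
        rw [← Finset.sum_div, ← hB]
      rw [h2, h3]
      push_cast
      ring
    rw [h1]
  rw [hPhi]
  -- suffices to show (1-c) S ≤ (1+c) B/2 + 2 P
  have hP0 : 0 ≤ x i₀ * x (i₀ + 1) := by
    rcases hx i₀ with h | h <;> rcases hx (i₀+1) with h' | h' <;> rw [h, h'] <;> norm_num
  have hB0 : 0 ≤ B := Finset.sum_nonneg (fun i _ => abs_nonneg _)
  by_cases hBz : B = 0
  · -- all edges equal, x constant
    have hall : ∀ i : ZMod n, x i = x (i + 1) := by
      intro i
      have hBz' : ∑ i : ZMod n, |x i - x (i + 1)| = 0 := by rw [← hB]; exact hBz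
      have h0 : |x i - x (i + 1)| = 0 :=
        (Finset.sum_eq_zero_iff_of_nonneg (fun i _ => abs_nonneg _)).mp hBz' i
          (Finset.mem_univ i)
      have := abs_eq_zero.mp h0
      linarith
    have hconst : ∀ j : ZMod n, x j = x i₀ := by
      have hk : ∀ k : ℕ, x (i₀ + (k : ZMod n)) = x i₀ := by
        intro k
        induction k with
        | zero => simp
        | succ k ih =>
          have : i₀ + ((k+1 : ℕ) : ZMod n) = (i₀ + (k : ZMod n)) + 1 := by push_cast; ring
          rw [this, ← hall (i₀ + (k : ZMod n))]
          exact ih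
      intro j
      have : j = i₀ + (((j - i₀).val : ℕ) : ZMod n) := by
        rw [ZMod.natCast_val, ZMod.cast_id]
        ring
      rw [this]
      exact hk _
    rcases hx i₀ with h | h
    · have hSz : S = 0 := by
        rw [hS]
        apply Finset.sum_eq_zero
        intro i _
        rw [hconst i, h]
      rw [hSz, hBz, h]
      nlinarith
    · have hSn : S = n := by
        rw [hS]
        rw [Finset.sum_congr rfl (fun i _ => by rw [hconst i, h])]
        rw [Finset.sum_const, card_zmod]; simp
      have hP1 : x i₀ * x (i₀ + 1) = 1 := by
        rw [h, ← hall i₀, h]; norm_num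
      rw [hSn, hBz, hP1]
      nlinarith
  · -- B ≠ 0 : at least two unequal edges
    obtain ⟨j, hj⟩ : ∃ j : ZMod n, x j ≠ x (j + 1) := by
      by_contra hno
      push_neg at hno
      apply hBz
      rw [hB]
      apply Finset.sum_eq_zero
      intro i _
      rw [hno i]; simp
    obtain ⟨j', hj'ne, hj'⟩ : ∃ j' : ZMod n, j' ≠ j ∧ x j' ≠ x (j' + 1) := by
      by_contra hno
      push_neg at hno
      exact hj (cycle_const hn x j (fun i hi => hno i hi))
    have habs1 : ∀ i : ZMod n, x i ≠ x (i + 1) → |x i - x (i + 1)| = 1 := by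
      intro i hi
      rcases hx i with h | h <;> rcases hx (i+1) with h' | h' <;>
        rw [h, h'] at hi ⊢ <;> revert hi <;> norm_num
    have hB2 : 2 ≤ B := by
      have hsub : ({j, j'} : Finset (ZMod n)) ⊆ Finset.univ := Finset.subset_univ _
      have hsum : ∑ i ∈ ({j, j'} : Finset (ZMod n)), |x i - x (i + 1)| = 2 := by
        rw [Finset.sum_pair (Ne.symm hj'ne), habs1 j hj, habs1 j' hj']
        norm_num
      calc (2:ℝ) = ∑ i ∈ ({j, j'} : Finset (ZMod n)), |x i - x (i + 1)| := hsum.symm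
        _ ≤ B := Finset.sum_le_sum_of_subset_of_nonneg hsub
            (fun i _ _ => abs_nonneg _)
    -- some coordinate is 0, so S ≤ n - 1
    obtain ⟨mm, hm⟩ : ∃ m : ZMod n, x m = 0 := by
      rcases hx j with h | h
      · exact ⟨j, h⟩
      · rcases hx (j+1) with h' | h'
        · exact ⟨j+1, h'⟩
        · exact absurd (h.trans h'.symm) hj
    have hS1 : S ≤ (n:ℝ) - 1 := by
      have hsplit := Finset.sum_erase_add Finset.univ x (Finset.mem_univ mm)
      have hbound : ∑ i ∈ Finset.univ.erase mm, x i ≤ (n:ℝ) - 1 := by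
        have hcard : (Finset.univ.erase mm).card = n - 1 := by
          rw [Finset.card_erase_of_mem (Finset.mem_univ mm), card_zmod]
        have := Finset.sum_le_card_nsmul (Finset.univ.erase mm) x 1
          (fun i _ => by rcases hx i with h | h <;> rw [h] <;> norm_num)
        rw [hcard] at this
        have hn1 : 1 ≤ n := by omega
        calc ∑ i ∈ Finset.univ.erase mm, x i ≤ (n - 1 : ℕ) • (1:ℝ) := this
          _ = (n:ℝ) - 1 := by
            rw [nsmul_eq_mul, mul_one, Nat.cast_sub hn1, Nat.cast_one]
      rw [hS, ← hsplit, hm, add_zero]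
      exact hbound
    have h1 : (1 - c) * S ≤ (1 - c) * ((n:ℝ) - 1) :=
      mul_le_mul_of_nonneg_left hS1 (by linarith)
    have h2 : (1 + c) * 2 ≤ (1 + c) * B :=
      mul_le_mul_of_nonneg_left hB2 (by linarith)
    nlinarith

/-- Vertex reduction: the value of `Phi` on the cube is dominated by a vertex value. -/
lemma phi_vertex [NeZero n] (hn : 3 ≤ n) (c : ℝ) (i₀ : ZMod n) :
    ∀ (k : ℕ) (x : ZMod n → ℝ), (∀ i, 0 ≤ x i ∧ x i ≤ 1) →
      (Finset.univ.filter (fun i => ¬(x i = 0 ∨ x i = 1))).card ≤ k →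
      ∃ y : ZMod n → ℝ, (∀ i, y i = 0 ∨ y i = 1) ∧ Phi n c i₀ x ≤ Phi n c i₀ y := by
  intro k
  induction k with
  | zero =>
    intro x hx hcard
    refine ⟨x, fun i => ?_, le_refl _⟩
    by_contra hbad
    have hmem : i ∈ Finset.univ.filter (fun i => ¬(x i = 0 ∨ x i = 1)) :=
      Finset.mem_filter.mpr ⟨Finset.mem_univ i, hbad⟩
    have := Finset.card_pos.mpr ⟨i, hmem⟩
    omega
  | succ k ih =>
    intro x hx hcard
    by_cases hempty : (Finset.univ.filter (fun i => ¬(x i = 0 ∨ x i = 1))).card = 0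
    · exact ih x hx (by omega)
    · obtain ⟨j, hj⟩ := Finset.card_pos.mp (by omega :
        0 < (Finset.univ.filter (fun i => ¬(x i = 0 ∨ x i = 1))).card)
      have hjbad : ¬(x j = 0 ∨ x j = 1) := (Finset.mem_filter.mp hj).2
      -- affine identity in coordinate j
      have haff : Phi n c i₀ x
          = (1 - x j) * Phi n c i₀ (Function.update x j 0)
            + x j * Phi n c i₀ (Function.update x j 1) := by
        unfold Phi
        rw [Finset.mul_sum, Finset.mul_sum, ← Finset.sum_add_distrib]
        apply Finset.sum_congr rfl
        intro i _
        have hne : i ≠ i + 1 := self_ne_succ hn i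
        by_cases hij : i = j
        · have hij1 : i + 1 ≠ j := by rw [← hij]; exact hne.symm
          subst hij
          simp only [Function.update_apply, if_neg hij1, eq_self_iff_true, if_true]
          ring
        · by_cases hij1 : i + 1 = j
          · subst hij1
            simp only [Function.update_apply, if_neg hij, eq_self_iff_true, if_true]
            ring
          · simp only [Function.update_apply, if_neg hij, if_neg hij1]
            ring
      -- bounds for the two updates
      have hupd : ∀ (v : ℝ), v = 0 ∨ v = 1 → ∀ i,
          0 ≤ Function.update x j v i ∧ Function.update x j v i ≤ 1 := by
        intro v hv i
        rw [Function.update_apply]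
        by_cases h : i = j
        · rcases hv with h' | h' <;> simp [h, h'] <;> norm_num
        · simp [h]; exact hx i
      have hcardupd : ∀ (v : ℝ), v = 0 ∨ v = 1 →
          (Finset.univ.filter (fun i => ¬(Function.update x j v i = 0
            ∨ Function.update x j v i = 1))).card ≤ k := by
        intro v hv
        have hsub : (Finset.univ.filter (fun i => ¬(Function.update x j v i = 0
            ∨ Function.update x j v i = 1)))
            ⊆ (Finset.univ.filter (fun i => ¬(x i = 0 ∨ x i = 1))).erase j := by
          intro i hi
          have hi' := (Finset.mem_filter.mp hi).2
          by_cases h : i = j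
          · exfalso
            rw [h] at hi'
            rw [Function.update_self] at hi'
            exact hi' hv
          · rw [Function.update_of_ne h] at hi'
            exact Finset.mem_erase.mpr ⟨h, Finset.mem_filter.mpr ⟨Finset.mem_univ i, hi'⟩⟩
        calc _ ≤ ((Finset.univ.filter (fun i => ¬(x i = 0 ∨ x i = 1))).erase j).card :=
              Finset.card_le_card hsub
          _ = (Finset.univ.filter (fun i => ¬(x i = 0 ∨ x i = 1))).card - 1 :=
              Finset.card_erase_of_mem hj
          _ ≤ k := by omega
      have hxj0 : 0 ≤ x j := (hx j).1
      have hxj1 : x j ≤ 1 := (hx j).2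
      obtain ⟨y0, hy0b, hy0⟩ := ih (Function.update x j 0)
        (hupd 0 (Or.inl rfl)) (hcardupd 0 (Or.inl rfl))
      obtain ⟨y1, hy1b, hy1⟩ := ih (Function.update x j 1)
        (hupd 1 (Or.inr rfl)) (hcardupd 1 (Or.inr rfl))
      rcases le_total (Phi n c i₀ (Function.update x j 0))
          (Phi n c i₀ (Function.update x j 1)) with hle | hle
      · refine ⟨y1, hy1b, ?_⟩
        rw [haff]
        have h1 := mul_le_mul_of_nonneg_left hle (by linarith : (0:ℝ) ≤ 1 - x j)
        nlinarith
      · refine ⟨y0, hy0b, ?_⟩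
        rw [haff]
        have h1 := mul_le_mul_of_nonneg_left hle (by linarith : (0:ℝ) ≤ x j)
        nlinarith

/-- The key inequality. -/
lemma key_ineq [NeZero n] (hn : 3 ≤ n) (c : ℝ)
    (hc1 : ((n:ℝ) - 2) / (n:ℝ) ≤ c) (hc2 : c ≤ 1)
    {γ : ZMod n → ℝ} (hγ : IsSignVector n γ)
    (a d : ZMod n → ℝ) (hd : ∀ i, 0 ≤ d i) (had : ∀ i, |a i| + d i ≤ 1) :
    ∑ i : ZMod n, (γ i * (a i * a (i + 1)) + c * (d i * d (i + 1))) ≤ (n:ℝ) * c := by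
  have hc0 : 0 ≤ c := le_trans (ratio_nonneg hn) hc1
  obtain ⟨i₀, hi₀⟩ := exists_neg_edge hγ a
  have hstep : ∑ i : ZMod n, (γ i * (a i * a (i + 1)) + c * (d i * d (i + 1)))
      ≤ Phi n c i₀ (fun i => |a i|) := by
    unfold Phi
    apply Finset.sum_le_sum
    intro i _
    have hdle : d i * d (i + 1) ≤ (1 - |a i|) * (1 - |a (i + 1)|) := by
      apply mul_le_mul (by linarith [had i]) (by linarith [had (i+1)]) (hd (i+1))
      linarith [had i, abs_nonneg (a i), hd i]
    have hd2 : c * (d i * d (i + 1)) ≤ c * ((1 - |a i|) * (1 - |a (i + 1)|)) :=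
      mul_le_mul_of_nonneg_left hdle hc0
    by_cases h : i = i₀
    · subst h
      rw [if_pos rfl, hi₀]
      simp only [neg_one_mul]
      linarith
    · rw [if_neg h, one_mul]
      have : γ i * (a i * a (i + 1)) ≤ |a i| * |a (i + 1)| := by
        calc γ i * (a i * a (i + 1)) ≤ |γ i * (a i * a (i + 1))| := le_abs_self _
          _ = |a i| * |a (i + 1)| := by rw [abs_mul, gamma_abs hγ, one_mul, abs_mul]
      linarith
  have habs_bounds : ∀ i : ZMod n, 0 ≤ |a i| ∧ |a i| ≤ 1 :=
    fun i => ⟨abs_nonneg _, by linarith [had i, hd i]⟩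
  obtain ⟨y, hyb, hyle⟩ := phi_vertex hn c i₀ _ (fun i => |a i|) habs_bounds le_rfl
  calc _ ≤ Phi n c i₀ (fun i => |a i|) := hstep
    _ ≤ Phi n c i₀ y := hyle
    _ ≤ (n:ℝ) * c := phi_bool_le hn c hc1 hc2 i₀ y hyb

end Key


section WiringBound

variable {n : ℕ}

/-- The `l`-component of a wiring applied to a behavior. -/
def PL (W : NCWiring n) (p : ZMod n → Bool → Bool → ℝ) (l : ℕ)
    (i : ZMod n) (t t' : Bool) : ℝ :=
  ∑ r ∈ W.R, ∑ r' ∈ W.R, W.q i l r * W.q (i + 1) l r' *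
    ∑ s : Bool, ∑ s' : Bool, p (W.g i r r') s s' * W.m i r s l t * W.m (i + 1) r' s' l t'

lemma apply_eq_PL (W : NCWiring n) (p : ZMod n → Bool → Bool → ℝ) :
    W.apply p = fun i t t' => ∑ l ∈ W.Λ, W.ρ l * PL W p l i t t' := rfl

noncomputable def Afun (W : NCWiring n) (l : ℕ) (j : ZMod n) (r : ℕ) : ℝ :=
  ((W.m j r true l true - W.m j r true l false)
    + (W.m j r false l true - W.m j r false l false)) / 2

noncomputable def Dfun (W : NCWiring n) (l : ℕ) (j : ZMod n) (r : ℕ) : ℝ :=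
  ((W.m j r true l true - W.m j r true l false)
    - (W.m j r false l true - W.m j r false l false)) / 2

noncomputable def afun (W : NCWiring n) (l : ℕ) (i : ZMod n) : ℝ :=
  ∑ r ∈ W.R, W.q i l r * Afun W l i r

noncomputable def dfun (W : NCWiring n) (l : ℕ) (i : ZMod n) : ℝ :=
  ∑ r ∈ W.R, W.q i l r * |Dfun W l i r|

lemma AD_bound (W : NCWiring n) (l : ℕ) (j : ZMod n) (r : ℕ) :
    |Afun W l j r| + |Dfun W l j r| ≤ 1 := by
  have h1 := W.m_sum j r true l
  have h2 := W.m_sum j r false l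
  simp only [Fintype.sum_bool] at h1 h2
  have p1 := W.m_nonneg j r true l true
  have p2 := W.m_nonneg j r true l false
  have p3 := W.m_nonneg j r false l true
  have p4 := W.m_nonneg j r false l false
  unfold Afun Dfun
  rcases abs_cases (((W.m j r true l true - W.m j r true l false)
      + (W.m j r false l true - W.m j r false l false)) / 2) with ⟨e1, _⟩ | ⟨e1, _⟩ <;>
    rcases abs_cases (((W.m j r true l true - W.m j r true l false)
      - (W.m j r false l true - W.m j r false l false)) / 2) with ⟨e2, _⟩ | ⟨e2, _⟩ <;>
    rw [e1, e2] <;> linarith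

lemma dfun_nonneg (W : NCWiring n) (l : ℕ) (i : ZMod n) : 0 ≤ dfun W l i :=
  Finset.sum_nonneg fun r _ => mul_nonneg (W.q_nonneg i l r) (abs_nonneg _)

lemma ad_bound (W : NCWiring n) {l : ℕ} (hl : l ∈ W.Λ) (i : ZMod n) :
    |afun W l i| + dfun W l i ≤ 1 := by
  have h1 : |afun W l i| ≤ ∑ r ∈ W.R, W.q i l r * |Afun W l i r| := by
    calc |afun W l i| ≤ ∑ r ∈ W.R, |W.q i l r * Afun W l i r| :=
          Finset.abs_sum_le_sum_abs _ _
      _ = ∑ r ∈ W.R, W.q i l r * |Afun W l i r| := by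
          apply Finset.sum_congr rfl
          intro r _
          rw [abs_mul, abs_of_nonneg (W.q_nonneg i l r)]
  have h2 : ∑ r ∈ W.R, W.q i l r * |Afun W l i r| + dfun W l i ≤ 1 := by
    unfold dfun
    rw [← Finset.sum_add_distrib]
    calc ∑ r ∈ W.R, (W.q i l r * |Afun W l i r| + W.q i l r * |Dfun W l i r|)
        ≤ ∑ r ∈ W.R, W.q i l r := by
          apply Finset.sum_le_sum
          intro r _
          have := AD_bound W l i r
          nlinarith [W.q_nonneg i l r, abs_nonneg (Afun W l i r), abs_nonneg (Dfun W l i r)]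
      _ = 1 := W.q_sum i l hl
  linarith

lemma omega_linear [NeZero n] (γ : ZMod n → ℝ) (s : Finset ℕ) (w : ℕ → ℝ)
    (P : ℕ → ZMod n → Bool → Bool → ℝ) :
    OmegaNC n γ (fun i a b => ∑ l ∈ s, w l * P l i a b)
      = ∑ l ∈ s, w l * OmegaNC n γ (P l) := by
  classical
  induction s using Finset.induction_on with
  | empty => simp [OmegaNC]
  | insert a s h ih =>
    simp only [Finset.sum_insert h]
    rw [← ih]
    unfold OmegaNC
    rw [Finset.mul_sum, ← Finset.sum_add_distrib]
    apply Finset.sum_congr rfl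
    intro i _
    simp only [Fintype.sum_bool]
    ring

lemma bool_pull (R : Finset ℕ) (F : Bool → Bool → ℕ → ℕ → ℝ) :
    ∑ t : Bool, ∑ t' : Bool, ∑ r ∈ R, ∑ r' ∈ R, F t t' r r'
      = ∑ r ∈ R, ∑ r' ∈ R, ∑ t : Bool, ∑ t' : Bool, F t t' r r' := by
  calc ∑ t : Bool, ∑ t' : Bool, ∑ r ∈ R, ∑ r' ∈ R, F t t' r r'
      = ∑ t : Bool, ∑ r ∈ R, ∑ t' : Bool, ∑ r' ∈ R, F t t' r r' :=
        Finset.sum_congr rfl fun t _ => Finset.sum_comm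
    _ = ∑ r ∈ R, ∑ t : Bool, ∑ t' : Bool, ∑ r' ∈ R, F t t' r r' := Finset.sum_comm
    _ = ∑ r ∈ R, ∑ t : Bool, ∑ r' ∈ R, ∑ t' : Bool, F t t' r r' :=
        Finset.sum_congr rfl fun r _ => Finset.sum_congr rfl fun t _ => Finset.sum_comm
    _ = ∑ r ∈ R, ∑ r' ∈ R, ∑ t : Bool, ∑ t' : Bool, F t t' r r' :=
        Finset.sum_congr rfl fun r _ => Finset.sum_comm

lemma pull_bool2 (R : Finset ℕ) (cf : Bool → Bool → ℝ) (F : ℕ → ℕ → Bool → Bool → ℝ) :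
    ∑ t : Bool, ∑ t' : Bool, cf t t' * ∑ r ∈ R, ∑ r' ∈ R, F r r' t t'
      = ∑ r ∈ R, ∑ r' ∈ R, ∑ t : Bool, ∑ t' : Bool, cf t t' * F r r' t t' := by
  have : ∀ t t', cf t t' * ∑ r ∈ R, ∑ r' ∈ R, F r r' t t'
      = ∑ r ∈ R, ∑ r' ∈ R, cf t t' * F r r' t t' := by
    intro t t'
    rw [Finset.mul_sum]
    exact Finset.sum_congr rfl fun r _ => Finset.mul_sum _ _ _
  simp only [this]
  exact bool_pull R (fun t t' r r' => cf t t' * F r r' t t')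

lemma omega_PL_le [NeZero n] (hn : 3 ≤ n) {γ : ZMod n → ℝ} (hγ : IsSignVector n γ)
    (c : ℝ) (hc1 : ((n:ℝ) - 2) / (n:ℝ) ≤ c) (hc2 : c ≤ 1)
    (p : ZMod n → Bool → Bool → ℝ)
    (hp : ∀ k s s', p k s s' = (1 + c * γ k * (sval s * sval s')) / 4)
    (W : NCWiring n) {l : ℕ} (hl : l ∈ W.Λ) :
    OmegaNC n γ (PL W p l) ≤ (n:ℝ) * c := by
  have hc0 : 0 ≤ c := le_trans (ratio_nonneg hn) hc1
  -- the inner scalar identity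
  have hInner : ∀ (i : ZMod n) (r r' : ℕ),
      (∑ t : Bool, ∑ t' : Bool, (sval t * sval t')
        * (W.q i l r * W.q (i + 1) l r' *
            ∑ s : Bool, ∑ s' : Bool, p (W.g i r r') s s'
              * W.m i r s l t * W.m (i + 1) r' s' l t'))
      = W.q i l r * W.q (i + 1) l r' *
          (Afun W l i r * Afun W l (i + 1) r'
            + c * γ (W.g i r r') * (Dfun W l i r * Dfun W l (i + 1) r')) := by
    intro i r r'
    simp only [Fintype.sum_bool, hp, Afun, Dfun, sval]
    norm_num
    ring
  -- per-i expansion of the correlator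
  have hTi : ∀ i : ZMod n,
      (∑ t : Bool, ∑ t' : Bool, sval t * sval t' * PL W p l i t t')
        = afun W l i * afun W l (i + 1)
          + ∑ r ∈ W.R, ∑ r' ∈ W.R, W.q i l r * W.q (i + 1) l r' *
              (c * γ (W.g i r r') * (Dfun W l i r * Dfun W l (i + 1) r')) := by
    intro i
    unfold PL
    rw [pull_bool2 W.R (fun t t' => sval t * sval t')]
    rw [Finset.sum_congr rfl fun r _ => Finset.sum_congr rfl fun r' _ => hInner i r r']
    unfold afun
    rw [Finset.sum_mul_sum]
    rw [← Finset.sum_add_distrib]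
    apply Finset.sum_congr rfl
    intro r _
    rw [← Finset.sum_add_distrib]
    apply Finset.sum_congr rfl
    intro r' _
    ring
  -- per-i bound
  have hbound : ∀ i : ZMod n,
      γ i * (∑ t : Bool, ∑ t' : Bool, sval t * sval t' * PL W p l i t t')
        ≤ γ i * (afun W l i * afun W l (i + 1))
          + c * (dfun W l i * dfun W l (i + 1)) := by
    intro i
    rw [hTi i, mul_add]
    have h2 : γ i * ∑ r ∈ W.R, ∑ r' ∈ W.R, W.q i l r * W.q (i + 1) l r' *
        (c * γ (W.g i r r') * (Dfun W l i r * Dfun W l (i + 1) r'))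
        ≤ c * (dfun W l i * dfun W l (i + 1)) := by
      have hrhs : c * (dfun W l i * dfun W l (i + 1))
          = ∑ r ∈ W.R, ∑ r' ∈ W.R,
              c * ((W.q i l r * |Dfun W l i r|) * (W.q (i + 1) l r' * |Dfun W l (i + 1) r'|)) := by
        unfold dfun
        rw [Finset.sum_mul_sum, Finset.mul_sum]
        exact Finset.sum_congr rfl fun r _ => by rw [Finset.mul_sum]
      rw [hrhs, Finset.mul_sum]
      apply Finset.sum_le_sum
      intro r _
      rw [Finset.mul_sum]
      apply Finset.sum_le_sum
      intro r' _
      have habs : |γ i * (W.q i l r * W.q (i + 1) l r' *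
          (c * γ (W.g i r r') * (Dfun W l i r * Dfun W l (i + 1) r')))|
          = c * ((W.q i l r * |Dfun W l i r|) * (W.q (i + 1) l r' * |Dfun W l (i + 1) r'|)) := by
        simp only [abs_mul, gamma_abs hγ, abs_of_nonneg hc0,
          abs_of_nonneg (W.q_nonneg i l r), abs_of_nonneg (W.q_nonneg (i+1) l r'), one_mul]
        ring
      calc γ i * (W.q i l r * W.q (i + 1) l r' *
          (c * γ (W.g i r r') * (Dfun W l i r * Dfun W l (i + 1) r')))
          ≤ |γ i * (W.q i l r * W.q (i + 1) l r' *
            (c * γ (W.g i r r') * (Dfun W l i r * Dfun W l (i + 1) r')))| := le_abs_self _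
        _ = _ := habs
    linarith
  -- conclude with the key inequality
  unfold OmegaNC
  calc ∑ i : ZMod n, γ i * ∑ t : Bool, ∑ t' : Bool, sval t * sval t' * PL W p l i t t'
      ≤ ∑ i : ZMod n, (γ i * (afun W l i * afun W l (i + 1))
          + c * (dfun W l i * dfun W l (i + 1))) :=
        Finset.sum_le_sum fun i _ => hbound i
    _ ≤ (n:ℝ) * c :=
        key_ineq hn c hc1 hc2 hγ (afun W l) (dfun W l) (dfun_nonneg W l)
          (fun i => ad_bound W hl i)

lemma omega_apply_le [NeZero n] (hn : 3 ≤ n) {γ : ZMod n → ℝ} (hγ : IsSignVector n γ)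
    (c : ℝ) (hc1 : ((n:ℝ) - 2) / (n:ℝ) ≤ c) (hc2 : c ≤ 1)
    (p : ZMod n → Bool → Bool → ℝ)
    (hp : ∀ k s s', p k s s' = (1 + c * γ k * (sval s * sval s')) / 4)
    (W : NCWiring n) :
    OmegaNC n γ (W.apply p) ≤ (n:ℝ) * c := by
  rw [apply_eq_PL, omega_linear γ W.Λ W.ρ (PL W p)]
  calc ∑ l ∈ W.Λ, W.ρ l * OmegaNC n γ (PL W p l)
      ≤ ∑ l ∈ W.Λ, W.ρ l * ((n:ℝ) * c) :=
        Finset.sum_le_sum fun l hl =>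
          mul_le_mul_of_nonneg_left (omega_PL_le hn hγ c hc1 hc2 p hp W hl)
            (W.ρ_nonneg l hl)
    _ = (n:ℝ) * c := by rw [← Finset.sum_mul, W.ρ_sum, one_mul]

end WiringBound


section Mixing

variable {n : ℕ}

/-- A wiring realizing "identity with probability `μ`, uniform noise otherwise". -/
noncomputable def mixWiring (n : ℕ) (μ : ℝ) (h0 : 0 ≤ μ) (h1 : μ ≤ 1) : NCWiring n where
  Λ := {0, 1}
  ρ := fun l => if l = 0 then μ else 1 - μ
  ρ_nonneg := by
    intro l _
    by_cases h : l = 0 <;> simp [h] <;> linarith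
  ρ_sum := by
    rw [Finset.sum_pair (by norm_num : (0:ℕ) ≠ 1)]
    norm_num
  R := {0}
  q := fun _ _ r => if r = 0 then 1 else 0
  q_nonneg := by
    intro j l r
    by_cases h : r = 0 <;> simp [h]
  q_sum := by intro j l _; simp
  g := fun i _ _ => i
  m := fun j r s l t => if l = 0 then (if t = s then 1 else 0) else 1/2
  m_nonneg := by
    intro j r s l t
    by_cases h : l = 0 <;> by_cases h' : t = s <;> simp [h, h']
  m_sum := by
    intro j r s l
    rw [Fintype.sum_bool]
    by_cases h : l = 0 <;> cases s <;> simp [h] <;> norm_num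

lemma mix_apply [NeZero n] (μ : ℝ) (h0 : 0 ≤ μ) (h1 : μ ≤ 1)
    (B : ZMod n → Bool → Bool → ℝ) :
    (mixWiring n μ h0 h1).apply B
      = fun i t t' => μ * B i t t'
          + (1 - μ) * ((∑ s : Bool, ∑ s' : Bool, B i s s') / 4) := by
  funext i t t'
  show ∑ l ∈ ({0, 1} : Finset ℕ), _ = _
  rw [Finset.sum_pair (by norm_num : (0:ℕ) ≠ 1)]
  simp only [mixWiring, Finset.sum_singleton, Fintype.sum_bool]
  norm_num
  cases t <;> cases t' <;> norm_num <;> exact Or.inl (by ring)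

lemma conv_F [NeZero n] (hn : 3 ≤ n) (γ : ZMod n → ℝ) {α β : ℝ}
    (h0 : 0 ≤ β) (hba : β ≤ α) (h1 : α ≤ 1) :
    NCConvertsTo n (Fmix n γ α) (Fmix n γ β) := by
  have hca : 0 < cc n α := cc_pos hn (le_trans h0 hba)
  have hcb : 0 < cc n β := cc_pos hn h0
  have hle : cc n β ≤ cc n α := cc_mono hn hba
  have hμ0 : 0 ≤ cc n β / cc n α := by positivity
  have hμ1 : cc n β / cc n α ≤ 1 := by rw [div_le_one hca]; exact hle
  refine ⟨mixWiring n (cc n β / cc n α) hμ0 hμ1, ?_⟩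
  rw [mix_apply]
  funext i t t'
  have hsum : (∑ s : Bool, ∑ s' : Bool, Fmix n γ α i s s') = 1 := by
    simp only [Fintype.sum_bool, Fmix_eq hn γ α, sval]
    norm_num
    ring
  rw [hsum]
  rw [Fmix_eq hn γ α, Fmix_eq hn γ β]
  have hcancel : cc n β / cc n α * cc n α = cc n β := div_mul_cancel₀ _ (ne_of_gt hca)
  linear_combination (γ i * (sval t * sval t') / 4) * hcancel

lemma not_conv [NeZero n] (hn : 3 ≤ n) {γ : ZMod n → ℝ} (hγ : IsSignVector n γ)
    {α α' : ℝ} (h0 : 0 ≤ α) (hlt : α < α') (h1 : α' ≤ 1) :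
    ¬ NCConvertsTo n (Fmix n γ α) (Fmix n γ α') := by
  rintro ⟨W, hW⟩
  have hub := omega_apply_le hn hγ (cc n α) (cc_lb hn h0)
    (cc_ub hn (le_of_lt (lt_of_lt_of_le hlt h1))) (Fmix n γ α)
    (fun k s s' => Fmix_eq hn γ α k s s') W
  rw [hW, omega_F hn γ hγ α'] at hub
  have hstrict := cc_strict hn hlt
  have hN := npos hn
  nlinarith

end Mixing

/-- for all `0 ≤ α < α' ≤ 1`, `F(α') → F(α)` but not `F(α) → F(α')`;
moreover every `F(α)` with `α ∈ [0,1]` lies in the interval between `F(1) = B_PR` and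
`F(0) = B_NPR` (i.e. `F(1) → F(α)` and `F(α) → F(0)`), and distinct members of the
family are inequivalent. Hence `{F(α) : α ∈ [0,1]}` is a strictly ordered chain with
infinitely many pairwise inequivalent elements, so the convertibility pre-order has
infinite height and is locally infinite. -/
theorem Fmix_strict_chain (n : ℕ) [NeZero n] (hn : 3 ≤ n)
    (γ : ZMod n → ℝ) (hγ : IsSignVector n γ) :
    (∀ α α' : ℝ, 0 ≤ α → α < α' → α' ≤ 1 →
      NCConvertsTo n (Fmix n γ α') (Fmix n γ α) ∧
        ¬ NCConvertsTo n (Fmix n γ α) (Fmix n γ α')) ∧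
    (∀ α ∈ Set.Icc (0 : ℝ) 1,
      NCConvertsTo n (Fmix n γ 1) (Fmix n γ α) ∧
        NCConvertsTo n (Fmix n γ α) (Fmix n γ 0)) ∧
    (∀ α ∈ Set.Icc (0 : ℝ) 1, ∀ α' ∈ Set.Icc (0 : ℝ) 1, α ≠ α' →
      ¬ (NCConvertsTo n (Fmix n γ α) (Fmix n γ α') ∧
          NCConvertsTo n (Fmix n γ α') (Fmix n γ α))) := by
  refine ⟨?_, ?_, ?_⟩
  · intro α α' h0 hlt h1
    exact ⟨conv_F hn γ h0 (le_of_lt hlt) h1, not_conv hn hγ h0 hlt h1⟩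
  · intro α hα
    exact ⟨conv_F hn γ hα.1 hα.2 le_rfl, conv_F hn γ le_rfl hα.1 hα.2⟩
  · rintro α hα α' hα' hne ⟨h1, h2⟩
    rcases lt_or_gt_of_ne hne with hlt | hlt
    · exact not_conv hn hγ hα.1 hlt hα'.2 h1
    · exact not_conv hn hγ hα'.1 hlt hα.2 h2
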